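/- The Fibonacci automaton accepts the word a^m if and only if m = f_n for some natural number n; that is, the language recognized by the Fibonacci automaton is exactly {a^{f_n} : n ∈ ℕ}. -/

import Mathlib

/-- Operations on a 2-level iterated pushdown store. -/
inductive Op (Γ : Type*) where
  | pop1 : Op Γ
  | pop2 : Op Γ
  | push1 : List Γ → Op Γ
  | push2 : List Γ → Op Γ

/-- A 2-level pushdown store: a finite list of entries `(A, s)` with `A` a letter of `Γ`
and `s ∈ Γ*` the inner store of the entry. -/
abbrev Store (Γ : Type*) := List (Γ × List Γ)

/-- The top symbols of a 2-level store: the letter of the top entry followed by the first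
letter of its inner store when that inner store is nonempty; an element of `Γ ∪ Γ²`. -/
def topsym {Γ : Type*} : Store Γ → List Γ
  | [] => []
  | (A, s) :: _ => A :: s.take 1

/-- Apply an operation to a 2-level store (a partial operation):
`pop1` removes the top entry; `pop2` removes the first letter of the inner store of the
top entry (when nonempty); `push1 w` replaces the top entry `(A, s)` by the entries
`(w_1, s), …, (w_m, s)`; `push2 u` replaces the top entry `(A, s)` by `(A, u ++ s)`. -/
def applyOp {Γ : Type*} : Op Γ → Store Γ → Option (Store Γ)
  | .pop1, _ :: rest => some rest
  | .pop2, (A, _ :: s) :: rest => some ((A, s) :: rest)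
  | .push1 w, (_, s) :: rest => some (w.map (fun x => (x, s)) ++ rest)
  | .push2 u, (A, s) :: rest => some ((A, u ++ s) :: rest)
  | _, _ => none

/-- A 2-iterated pushdown automaton with state set `Q`, input alphabet `In` and store
alphabet `Γ`: an initial state `q0`, an initial store symbol `Z`, and a transition table
`δ` assigning to each triple `(q, a, t)` — with `a ∈ In ∪ {ε}` and `t ∈ Γ ∪ Γ²` — a
finite set (list) of instructions `(q', op)`. -/
structure IPDA2 (Q In Γ : Type*) where
  q0 : Q
  Z : Γ
  δ : Q → Option In → List Γ → List (Q × Op Γ)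

/-- A configuration: current state, remaining input word, current 2-level store. -/
abbrev Config (Q In Γ : Type*) := Q × List In × Store Γ

/-- One computation step: an instruction from `δ(q, a, topsym ω)` may be applied, where
`a = ε` (no input consumed) or `a` is the first letter of the remaining input (which is
then consumed); the state changes to `q'` and the operation is applied to the store. -/
inductive IPDA2.Step {Q In Γ : Type*} (M : IPDA2 Q In Γ) :
    Config Q In Γ → Config Q In Γ → Prop
  | eps {q q' : Q} {w : List In} {ω ω' : Store Γ} {op : Op Γ} :
      (q', op) ∈ M.δ q none (topsym ω) → applyOp op ω = some ω' →
      M.Step (q, w, ω) (q', w, ω')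
  | read {q q' : Q} {a : In} {w : List In} {ω ω' : Store Γ} {op : Op Γ} :
      (q', op) ∈ M.δ q (some a) (topsym ω) → applyOp op ω = some ω' →
      M.Step (q, a :: w, ω) (q', w, ω')

/-- A finite sequence of computation steps. -/
def IPDA2.Steps {Q In Γ : Type*} (M : IPDA2 Q In Γ) :
    Config Q In Γ → Config Q In Γ → Prop :=
  Relation.ReflTransGen M.Step

/-- Acceptance: some finite sequence of steps leads from the initial configuration
`(q0, w, [(Z, ε)])` to a configuration with empty remaining input and empty store. -/
def IPDA2.Accepts {Q In Γ : Type*} (M : IPDA2 Q In Γ) (w : List In) : Prop :=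
  ∃ q : Q, M.Steps (M.q0, w, [(M.Z, [])]) (q, [], [])

/-- The states of the Fibonacci automaton. -/
inductive QF where
  | q0 : QF
  | q1 : QF
  | q2 : QF
  deriving DecidableEq

/-- The one-letter input alphabet `{a}` of the Fibonacci automaton. -/
inductive InA where
  | a : InA
  deriving DecidableEq

/-- The store alphabet `Γ = {Z, X₁, X₂, F}` of the Fibonacci automaton. -/
inductive ΓF where
  | Z : ΓF
  | X1 : ΓF
  | X2 : ΓF
  | F : ΓF
  deriving DecidableEq

/-- The transition table of the Fibonacci automaton. -/
def fibδ : QF → Option InA → List ΓF → List (QF × Op ΓF)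
  | .q0, none, [.Z] => [(.q0, .push2 [.F]), (.q0, .push1 [.X2])]
  | .q0, none, [.Z, .F] => [(.q0, .push2 [.F]), (.q0, .push1 [.X2])]
  | .q0, none, [.X1, .F] => [(.q1, .pop2)]
  | .q0, none, [.X2, .F] => [(.q2, .pop2)]
  | .q0, some .a, [.X1] => [(.q0, .pop1)]
  | .q0, some .a, [.X2] => [(.q0, .pop1)]
  | .q1, none, [.X1, .F] => [(.q0, .push1 [.X1, .X2])]
  | .q1, none, [.X1] => [(.q0, .push1 [.X1, .X2])]
  | .q2, none, [.X2, .F] => [(.q0, .push1 [.X1])]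
  | .q2, none, [.X2] => [(.q0, .push1 [.X1])]
  | _, _, _ => []

/-- The Fibonacci automaton, the 2-iterated pushdown automaton recognizing `{a^{f_n}}`. -/
def fibM : IPDA2 QF InA ΓF := ⟨.q0, .Z, fibδ⟩

section AuxFib

/-- Value of a store entry with the given letter and inner-store length. -/
def entVal : ΓF → ℕ → ℕ
  | .X1, k => Nat.fib (k + 2)
  | .X2, k => Nat.fib (k + 1)
  | _, _ => 0

/-- Total value of a store. -/
def W : Store ΓF → ℕ
  | [] => 0
  | (A, s) :: rest => entVal A s.length + W rest

/-- Weight of a configuration (state plus store). -/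
def cw : QF → Store ΓF → ℕ
  | .q0, ω => W ω
  | _, [] => 0
  | .q1, (A, s) :: rest => entVal A (s.length + 1) + W rest
  | .q2, (A, s) :: rest => entVal A (s.length + 1) + W rest

lemma fib3 (k : ℕ) : Nat.fib (k + 3) = Nat.fib (k + 2) + Nat.fib (k + 1) := by
  have h := Nat.fib_add_two (n := k + 1)
  ring_nf at h ⊢
  omega

lemma good_cons {A : ΓF} {s : List ΓF} {rest : Store ΓF}
    (hA : A = ΓF.X1 ∨ A = ΓF.X2)
    (h : ∀ e ∈ rest, e.1 = ΓF.X1 ∨ e.1 = ΓF.X2) :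
    ∀ e ∈ ((A, s) :: rest : Store ΓF), e.1 = ΓF.X1 ∨ e.1 = ΓF.X2 := by
  rintro e he
  rcases List.mem_cons.mp he with rfl | he
  · simpa using hA
  · exact h e he

lemma lemA (qf : QF) (c : Config QF InA ΓF)
    (h : fibM.Steps c (qf, [], [])) :
    (∀ e ∈ c.2.2, e.1 = ΓF.X1 ∨ e.1 = ΓF.X2) →
    c.2.1 = List.replicate (cw c.1 c.2.2) InA.a := by
  unfold IPDA2.Steps at h
  induction h using Relation.ReflTransGen.head_induction_on with
  | refl => intro _; cases qf <;> simp [cw, W]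
  | head hstep hrest ih =>
    intro hg
    cases hstep with
    | @eps q q' w ω ω' op hmem happ =>
      obtain _ | ⟨⟨A, s⟩, rest⟩ := ω
      · cases op <;> simp [applyOp] at happ
      · have hA := hg (A, s) List.mem_cons_self
        have hrg : ∀ e ∈ rest, e.1 = ΓF.X1 ∨ e.1 = ΓF.X2 :=
          fun e he => hg e (List.mem_cons_of_mem _ he)
        simp only at hA
        rcases hA with rfl | rfl <;> cases q <;>
          rcases s with _ | ⟨_ | _ | _ | _, s⟩ <;>
            simp only [fibM, fibδ, topsym, List.take, List.mem_cons,
              List.not_mem_nil, or_false, Prod.mk.injEq] at hmem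
        all_goals obtain ⟨rfl, rfl⟩ := hmem
        all_goals (simp [applyOp] at happ; subst happ)
        · -- q0, X1, F::s → q1
          rw [ih (good_cons (Or.inl rfl) hrg)]
          simp [cw, W, entVal]
        · -- q1, X1, [] → q0, push1 [X1,X2]
          rw [ih (good_cons (Or.inl rfl) (good_cons (Or.inr rfl) hrg))]
          congr 1
          simp only [cw, W, entVal, List.length_cons, List.length_nil]
          have h3 := fib3 0
          norm_num at h3 ⊢
          omega
        · -- q1, X1, F::s → q0, push1 [X1,X2]
          rw [ih (good_cons (Or.inl rfl) (good_cons (Or.inr rfl) hrg))]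
          congr 1
          simp only [cw, W, entVal, List.length_cons]
          have h3 := fib3 s.length
          have h4 := fib3 (s.length + 1)
          ring_nf at h3 h4 ⊢
          omega
        · -- q0, X2, F::s → q2
          rw [ih (good_cons (Or.inr rfl) hrg)]
          simp [cw, W, entVal]
        · -- q2, X2, [] → q0, push1 [X1]
          rw [ih (good_cons (Or.inl rfl) hrg)]; rfl
        · -- q2, X2, F::s → q0, push1 [X1]
          rw [ih (good_cons (Or.inl rfl) hrg)]; rfl
    | @read q q' a w ω ω' op hmem happ =>
      cases a
      obtain _ | ⟨⟨A, s⟩, rest⟩ := ω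
      · cases op <;> simp [applyOp] at happ
      · have hA := hg (A, s) List.mem_cons_self
        have hrg : ∀ e ∈ rest, e.1 = ΓF.X1 ∨ e.1 = ΓF.X2 :=
          fun e he => hg e (List.mem_cons_of_mem _ he)
        simp only at hA
        rcases hA with rfl | rfl <;> cases q <;>
          rcases s with _ | ⟨_ | _ | _ | _, s⟩ <;>
            simp only [fibM, fibδ, topsym, List.take, List.mem_cons,
              List.not_mem_nil, or_false, Prod.mk.injEq] at hmem
        all_goals obtain ⟨rfl, rfl⟩ := hmem
        all_goals (simp [applyOp] at happ; subst happ)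
        · -- q0, X1, [] : read a, pop1
          have hw : w = List.replicate (cw QF.q0 rest) InA.a := ih hrg
          have hc : cw QF.q0 ((ΓF.X1, ([] : List ΓF)) :: rest) = cw QF.q0 rest + 1 := by
            simp only [cw, W, entVal, List.length_nil]; rw [Nat.fib_two]; omega
          show InA.a :: w = List.replicate (cw QF.q0 ((ΓF.X1, ([] : List ΓF)) :: rest)) InA.a
          rw [hw, hc, List.replicate_succ]
        · -- q0, X2, [] : read a, pop1
          have hw : w = List.replicate (cw QF.q0 rest) InA.a := ih hrg
          have hc : cw QF.q0 ((ΓF.X2, ([] : List ΓF)) :: rest) = cw QF.q0 rest + 1 := by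
            simp only [cw, W, entVal, List.length_nil]; rw [Nat.fib_one]; omega
          show InA.a :: w = List.replicate (cw QF.q0 ((ΓF.X2, ([] : List ΓF)) :: rest)) InA.a
          rw [hw, hc, List.replicate_succ]

lemma lemZ (qf : QF) (c : Config QF InA ΓF)
    (h : fibM.Steps c (qf, [], [])) :
    ∀ k w, c = (QF.q0, w, [(ΓF.Z, List.replicate k ΓF.F)]) →
    ∃ n, w = List.replicate (Nat.fib (n + 1)) InA.a := by
  unfold IPDA2.Steps at h
  induction h using Relation.ReflTransGen.head_induction_on with
  | refl => intro k w hc; simp at hc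
  | head hstep hrest ih =>
    intro k w hc
    subst hc
    cases hstep with
    | @read _ q' a' w' _ ω' op hmem happ =>
      rcases k with _ | k <;>
        simp [fibM, fibδ, topsym, List.replicate_zero, List.replicate_succ] at hmem
    | @eps _ q' _ _ ω' op hmem happ =>
      have hmem' : (q' = QF.q0 ∧ op = Op.push2 [ΓF.F]) ∨
          (q' = QF.q0 ∧ op = Op.push1 [ΓF.X2]) := by
        rcases k with _ | k <;>
          simpa [fibM, fibδ, topsym, List.replicate_zero, List.replicate_succ,
            Prod.mk.injEq] using hmem
      rcases hmem' with ⟨rfl, rfl⟩ | ⟨rfl, rfl⟩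
      · -- push2 [F]
        simp only [applyOp, Option.some.injEq] at happ
        subst happ
        exact ih (k + 1) w (by simp [List.replicate_succ])
      · -- push1 [X2]
        simp only [applyOp, List.map, List.append_nil, Option.some.injEq] at happ
        subst happ
        have hw := lemA qf _ hrest (by
          rintro e he
          simp only [List.mem_singleton] at he
          subst he
          exact Or.inr rfl)
        exact ⟨k, by simpa [cw, W, entVal] using hw⟩

lemma runZ (w : List InA) (n : ℕ) :
    fibM.Steps (QF.q0, w, [(ΓF.Z, [])]) (QF.q0, w, [(ΓF.Z, List.replicate n ΓF.F)]) := by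
  induction n with
  | zero => exact Relation.ReflTransGen.refl
  | succ n ih =>
    refine Relation.ReflTransGen.tail ih ?_
    refine IPDA2.Step.eps (op := .push2 [ΓF.F]) ?_ ?_
    · cases n <;> simp [fibM, fibδ, topsym, List.replicate_succ]
    · simp [applyOp, List.replicate_succ]

lemma run1 (j : ℕ) : ∀ (rest : Store ΓF) (w : List InA),
    fibM.Steps (QF.q0, List.replicate (Nat.fib (j + 2)) InA.a ++ w,
        (ΓF.X1, List.replicate j ΓF.F) :: rest) (QF.q0, w, rest) ∧
    fibM.Steps (QF.q0, List.replicate (Nat.fib (j + 1)) InA.a ++ w,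
        (ΓF.X2, List.replicate j ΓF.F) :: rest) (QF.q0, w, rest) := by
  induction j with
  | zero =>
    intro rest w
    constructor
    · have hword : List.replicate (Nat.fib 2) InA.a ++ w = InA.a :: w := by
        rw [Nat.fib_two]; rfl
      rw [hword]
      refine Relation.ReflTransGen.single
        (IPDA2.Step.read (op := .pop1) ?_ ?_)
      · simp [fibM, fibδ, topsym]
      · simp [applyOp]
    · have hword : List.replicate (Nat.fib 1) InA.a ++ w = InA.a :: w := by
        rw [Nat.fib_one]; rfl
      rw [hword]
      refine Relation.ReflTransGen.single
        (IPDA2.Step.read (op := .pop1) ?_ ?_)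
      · simp [fibM, fibδ, topsym]
      · simp [applyOp]
  | succ j ih =>
    intro rest w
    constructor
    · -- X1 entry with inner store F^{j+1}
      have hword : List.replicate (Nat.fib (j + 1 + 2)) InA.a ++ w
          = List.replicate (Nat.fib (j + 2)) InA.a ++
            (List.replicate (Nat.fib (j + 1)) InA.a ++ w) := by
        have h3 := fib3 j
        rw [show j + 1 + 2 = j + 3 from rfl, h3, List.replicate_add, List.append_assoc]
      rw [hword]
      set u := List.replicate (Nat.fib (j + 2)) InA.a ++
        (List.replicate (Nat.fib (j + 1)) InA.a ++ w) with hu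
      have s1 : fibM.Step (QF.q0, u, (ΓF.X1, List.replicate (j + 1) ΓF.F) :: rest)
          (QF.q1, u, (ΓF.X1, List.replicate j ΓF.F) :: rest) := by
        refine IPDA2.Step.eps (op := .pop2) ?_ ?_
        · simp [fibM, fibδ, topsym, List.replicate_succ]
        · simp [applyOp, List.replicate_succ]
      have s2 : fibM.Step (QF.q1, u, (ΓF.X1, List.replicate j ΓF.F) :: rest)
          (QF.q0, u, (ΓF.X1, List.replicate j ΓF.F) ::
            (ΓF.X2, List.replicate j ΓF.F) :: rest) := by
        refine IPDA2.Step.eps (op := .push1 [ΓF.X1, ΓF.X2]) ?_ ?_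
        · cases j <;> simp [fibM, fibδ, topsym, List.replicate_succ]
        · simp [applyOp]
      have e1 := (ih ((ΓF.X2, List.replicate j ΓF.F) :: rest)
        (List.replicate (Nat.fib (j + 1)) InA.a ++ w)).1
      have e2 := (ih rest w).2
      exact Relation.ReflTransGen.head s1 (Relation.ReflTransGen.head s2
        (Relation.ReflTransGen.trans e1 e2))
    · -- X2 entry with inner store F^{j+1}
      show fibM.Steps (QF.q0, List.replicate (Nat.fib (j + 2)) InA.a ++ w,
        (ΓF.X2, List.replicate (j + 1) ΓF.F) :: rest) (QF.q0, w, rest)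
      set u := List.replicate (Nat.fib (j + 2)) InA.a ++ w with hu
      have s1 : fibM.Step (QF.q0, u, (ΓF.X2, List.replicate (j + 1) ΓF.F) :: rest)
          (QF.q2, u, (ΓF.X2, List.replicate j ΓF.F) :: rest) := by
        refine IPDA2.Step.eps (op := .pop2) ?_ ?_
        · simp [fibM, fibδ, topsym, List.replicate_succ]
        · simp [applyOp, List.replicate_succ]
      have s2 : fibM.Step (QF.q2, u, (ΓF.X2, List.replicate j ΓF.F) :: rest)
          (QF.q0, u, (ΓF.X1, List.replicate j ΓF.F) :: rest) := by
        refine IPDA2.Step.eps (op := .push1 [ΓF.X1]) ?_ ?_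
        · cases j <;> simp [fibM, fibδ, topsym, List.replicate_succ]
        · simp [applyOp]
      exact Relation.ReflTransGen.head s1
        (Relation.ReflTransGen.head s2 (ih rest w).1)

end AuxFib


/-- The Fibonacci automaton accepts `a^m` if and only if `m = f_n` for some `n`:
its language is exactly `{a^{f_n} : n ∈ ℕ}`, where `f_n = Nat.fib (n+1)` (the Fibonacci
sequence with `f_0 = f_1 = 1`). -/
theorem fibM_language (u : List InA) :
    fibM.Accepts u ↔ ∃ n : ℕ, u = List.replicate (Nat.fib (n + 1)) InA.a := by
  constructor
  · rintro ⟨qf, h⟩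
    exact lemZ qf _ h 0 u rfl
  · rintro ⟨n, rfl⟩
    refine ⟨QF.q0, ?_⟩
    have h1 := runZ (List.replicate (Nat.fib (n + 1)) InA.a) n
    have h2 : fibM.Step
        (QF.q0, List.replicate (Nat.fib (n + 1)) InA.a, [(ΓF.Z, List.replicate n ΓF.F)])
        (QF.q0, List.replicate (Nat.fib (n + 1)) InA.a, [(ΓF.X2, List.replicate n ΓF.F)]) := by
      refine IPDA2.Step.eps (op := .push1 [ΓF.X2]) ?_ ?_
      · cases n <;> simp [fibM, fibδ, topsym, List.replicate_succ]
      · simp [applyOp]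
    have h3 := (run1 n [] []).2
    have h3' : fibM.Steps
        (QF.q0, List.replicate (Nat.fib (n + 1)) InA.a, [(ΓF.X2, List.replicate n ΓF.F)])
        (QF.q0, [], []) := by simpa using h3
    exact Relation.ReflTransGen.trans (Relation.ReflTransGen.tail h1 h2) h3'
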